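/- Let X be a Banach space, I = [0,b], 0 = t₀ < t₁ < ⋯ < t_{m+1} = b, and (T(t))_{t∈I} a family of bounded operators with sup_{t∈I}‖T(t)‖ ≤ M such that t ↦ T(t) is continuous on (0,b] in the operator norm. Assume f : I × X × X → X satisfies ‖f(t,x,y)‖ ≤ μ₁(t) + μ₂(t)‖x‖ + μ₃(t)‖y‖ with μ_i ∈ L^∞(I,ℝ≥0), (Hx)(t) = ∫₀ᵗ h(t,s,x(s)) ds with ‖h(t,s,z)‖ ≤ m(t,s)‖z‖, K_i* = sup_{t∈I} ∫_{t_{i−1}}^{t_i} m(t,s) ds < ∞, and w ∈ L^∞(I,X). For x ∈ Ω_r define (Q₂x)(t) = ∫_{t_i}^{t} T(t−s)(f(s,x(s),(Hx)(s)) + w(s)) ds for t ∈ (t_i, t_{i+1}] (with t_0 = 0 on [0,t₁]). Then the family {Q₂x : x ∈ Ω_r} is equicontinuous on each interval (t_i, t_{i+1}]: for all ε > 0 and every i there exists δ > 0 such that for all x ∈ Ω_r and all r₁, r₂ ∈ (t_i, t_{i+1}] with |r₂ − r₁| < δ one has ‖(Q₂x)(r₂) − (Q₂x)(r₁)‖ <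 ε. -/

import Mathlib

open MeasureTheory

/-- Membership in the space `PC(I, X)` of piecewise-continuous functions on `I = [0, b]`
relative to the partition `0 = t 0 < t 1 < ⋯ < t m < t (m+1) = b`. -/
def IsPC {X : Type*} [NormedAddCommGroup X]
    (b : ℝ) (m : ℕ) (tt : ℕ → ℝ) (x : ℝ → X) : Prop :=
  (∃ C : ℝ, ∀ s ∈ Set.Icc (0:ℝ) b, ‖x s‖ ≤ C) ∧
  (∀ i ≤ m, ContinuousOn x (Set.Ioc (tt i) (tt (i + 1)))) ∧
  (∀ i ≤ m, ∃ L : X, Filter.Tendsto x (nhdsWithin (tt i) (Set.Ioi (tt i))) (nhds L))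


private lemma clamp_cont (b : ℝ) : Continuous (fun t : ℝ => max 0 (min b t)) :=
  continuous_const.max (continuous_const.min continuous_id)

private lemma clamp_mem (b : ℝ) (hb : 0 ≤ b) (t : ℝ) :
    max 0 (min b t) ∈ Set.Icc (0:ℝ) b :=
  ⟨le_max_left _ _, max_le hb (min_le_left _ _)⟩

private lemma clamp_eq (b t : ℝ) (ht : t ∈ Set.Icc (0:ℝ) b) :
    max 0 (min b t) = t := by
  rw [min_eq_right ht.2, max_eq_right ht.1]

private lemma cover_aux (tt : ℕ → ℝ) (ht0 : tt 0 = 0) :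
    ∀ n : ℕ, ∀ y : ℝ, 0 < y → y ≤ tt (n + 1) →
      ∃ j ≤ n, y ∈ Set.Ioc (tt j) (tt (j + 1)) := by
  intro n
  induction n with
  | zero => exact fun y hy hy' => ⟨0, le_rfl, by rw [ht0]; exact ⟨hy, hy'⟩⟩
  | succ n ih =>
    intro y hy hy'
    by_cases hc : y ≤ tt (n + 1)
    · obtain ⟨j, hj, hmem⟩ := ih y hy hc
      exact ⟨j, hj.trans (Nat.le_succ n), hmem⟩
    · exact ⟨n + 1, le_rfl, ⟨lt_of_not_ge hc, hy'⟩⟩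

private lemma pc_meas {X : Type*} [NormedAddCommGroup X]
    (b : ℝ) (m : ℕ) (tt : ℕ → ℝ) (ht0 : tt 0 = 0) (htb : tt (m + 1) = b)
    (x : ℝ → X) (hx : ∀ i ≤ m, ContinuousOn x (Set.Ioc (tt i) (tt (i + 1)))) :
    AEStronglyMeasurable x (volume.restrict (Set.Ioc (0:ℝ) b)) := by
  have hcover : Set.Ioc (0:ℝ) b ⊆ ⋃ j : Fin (m + 1), Set.Ioc (tt j) (tt (j + 1)) := by
    intro y hy
    obtain ⟨j, hj, hmem⟩ := cover_aux tt ht0 m y hy.1 (htb ▸ hy.2)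
    exact Set.mem_iUnion.mpr ⟨⟨j, Nat.lt_succ_of_le hj⟩, hmem⟩
  have h1 : volume.restrict (Set.Ioc (0:ℝ) b) ≤
      Measure.sum (fun j : Fin (m + 1) => volume.restrict (Set.Ioc (tt j) (tt (j + 1)))) :=
    le_trans (Measure.restrict_mono hcover le_rfl) Measure.restrict_iUnion_le
  refine AEStronglyMeasurable.mono_measure ?_ h1
  rw [aestronglyMeasurable_sum_measure_iff]
  exact fun j => (hx j (Nat.lt_succ_iff.mp j.2)).aestronglyMeasurable measurableSet_Ioc

private lemma Hx_meas {X : Type*} [NormedAddCommGroup X] [NormedSpace ℝ X]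
    (b : ℝ) (hb : 0 < b) (x : ℝ → X)
    (hx : AEStronglyMeasurable x (volume.restrict (Set.Ioc (0:ℝ) b)))
    (h : ℝ → ℝ → X → X)
    (hh_cont : ContinuousOn (fun p : ℝ × ℝ × X => h p.1 p.2.1 p.2.2)
      (Set.Icc (0:ℝ) b ×ˢ (Set.Icc (0:ℝ) b ×ˢ Set.univ))) :
    AEStronglyMeasurable (fun s => ∫ τ in (0:ℝ)..s, h s τ (x τ))
      (volume.restrict (Set.Ioc (0:ℝ) b)) := by
  set ν := volume.restrict (Set.Ioc (0:ℝ) b) with hν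
  -- the globally continuous clamped version of h
  set g : ℝ × ℝ × X → X := fun p =>
    h (max 0 (min b p.1)) (max 0 (min b p.2.1)) p.2.2 with hg
  have hgc : Continuous g := by
    have hmap : Continuous (fun p : ℝ × ℝ × X =>
        ((max 0 (min b p.1), max 0 (min b p.2.1), p.2.2) : ℝ × ℝ × X)) :=
      ((clamp_cont b).comp continuous_fst).prodMk
        (((clamp_cont b).comp (continuous_fst.comp continuous_snd)).prodMk
          (continuous_snd.comp continuous_snd))
    exact hh_cont.comp_continuous hmap
      (fun p => ⟨clamp_mem b hb.le _, clamp_mem b hb.le _, Set.mem_univ _⟩)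
  -- the jointly a.e.-strongly-measurable integrand with indicator
  have hxm : AEStronglyMeasurable (fun p : ℝ × ℝ => x p.2) (ν.prod ν) :=
    hx.comp_quasiMeasurePreserving Measure.quasiMeasurePreserving_snd
  have hbase : AEStronglyMeasurable (fun p : ℝ × ℝ => g (p.1, p.2, x p.2)) (ν.prod ν) :=
    hgc.comp_aestronglyMeasurable
      ((measurable_fst.aestronglyMeasurable).prodMk
        ((measurable_snd.aestronglyMeasurable).prodMk hxm))
  have hSmeas : MeasurableSet {p : ℝ × ℝ | p.2 ∈ Set.Ioc 0 p.1} := by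
    have : {p : ℝ × ℝ | p.2 ∈ Set.Ioc 0 p.1}
        = {p : ℝ × ℝ | (0:ℝ) < p.2} ∩ {p : ℝ × ℝ | p.2 ≤ p.1} := by
      ext p; simp [Set.mem_Ioc, Set.mem_setOf_eq]
    rw [this]
    exact (measurableSet_lt measurable_const measurable_snd).inter
      (measurableSet_le measurable_snd measurable_fst)
  have hG : AEStronglyMeasurable
      ({p : ℝ × ℝ | p.2 ∈ Set.Ioc 0 p.1}.indicator
        (fun p : ℝ × ℝ => g (p.1, p.2, x p.2))) (ν.prod ν) :=
    hbase.indicator hSmeas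
  have key := hG.integral_prod_right'
  refine key.congr ?_
  filter_upwards [ae_restrict_mem measurableSet_Ioc] with s hs
  have hs0 : (0:ℝ) ≤ s := hs.1.le
  have e1 : (fun τ => ({p : ℝ × ℝ | p.2 ∈ Set.Ioc 0 p.1}.indicator
      (fun p : ℝ × ℝ => g (p.1, p.2, x p.2))) (s, τ))
      = (Set.Ioc (0:ℝ) s).indicator (fun τ => g (s, τ, x τ)) := by
    funext τ
    by_cases hτ : τ ∈ Set.Ioc (0:ℝ) s
    · rw [Set.indicator_of_mem hτ, Set.indicator_of_mem (by exact hτ)]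
    · rw [Set.indicator_of_notMem hτ, Set.indicator_of_notMem (by exact hτ)]
  rw [e1, integral_indicator measurableSet_Ioc, hν,
    Measure.restrict_restrict measurableSet_Ioc,
    Set.inter_eq_self_of_subset_left (Set.Ioc_subset_Ioc le_rfl hs.2),
    intervalIntegral.integral_of_le hs0]
  refine setIntegral_congr_fun measurableSet_Ioc (fun τ hτ => ?_)
  simp only [hg]
  rw [clamp_eq b s ⟨hs.1.le, hs.2⟩, clamp_eq b τ ⟨hτ.1.le, hτ.2.trans hs.2⟩]


private lemma arith_aux (P ε : ℝ) (hP : 0 ≤ P) (hε : 0 < ε) :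
    P * (ε / (3 * (P + 1))) < ε / 3 := by
  have h1 : P * (ε / (3 * (P + 1))) = P * ε / (3 * (P + 1)) := by ring
  rw [h1, div_lt_div_iff₀ (by positivity) (by norm_num)]
  nlinarith

private lemma key_integrable {X : Type*} [NormedAddCommGroup X] [NormedSpace ℝ X]
    (b M B : ℝ) (hb : 0 < b) (T : ℝ → X →L[ℝ] X)
    (hT : ∀ t ∈ Set.Icc (0:ℝ) b, ‖T t‖ ≤ M)
    (hTc : ContinuousOn T (Set.Ioc (0:ℝ) b))
    (F : ℝ → X)
    (hFm : AEStronglyMeasurable F (volume.restrict (Set.Ioc (0:ℝ) b)))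
    (hFb : ∀ s ∈ Set.Icc (0:ℝ) b, ‖F s‖ ≤ B)
    (a ρ ρ' : ℝ) (ha : 0 ≤ a) (haρ : a ≤ ρ) (hρρ' : ρ ≤ ρ') (hρ'b : ρ' ≤ b) :
    IntervalIntegrable (fun s => T (ρ' - s) (F s)) volume a ρ := by
  have hM0 : 0 ≤ M := le_trans (norm_nonneg _) (hT 0 ⟨le_refl _, hb.le⟩)
  rw [intervalIntegrable_iff_integrableOn_Ioc_of_le haρ]
  have hTmeas : AEStronglyMeasurable (fun s => T (ρ' - s))
      (volume.restrict (Set.Ioc a ρ)) := by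
    have hcont : ContinuousOn (fun s => T (ρ' - s)) (Set.Ico a ρ') := by
      refine hTc.comp (continuous_const.sub continuous_id).continuousOn ?_
      intro s hs
      refine ⟨?_, ?_⟩
      · show (0:ℝ) < ρ' - s; linarith [hs.2]
      · show ρ' - s ≤ b; linarith [hs.1, ha, hρ'b]
    have h1 : AEStronglyMeasurable (fun s => T (ρ' - s))
        (volume.restrict (Set.Ioo a ρ)) :=
      (hcont.aestronglyMeasurable measurableSet_Ico).mono_measure
        (Measure.restrict_mono (fun y (hy : y ∈ Set.Ioo a ρ) =>
        Set.mem_Ico.mpr ⟨hy.1.le, lt_of_lt_of_le hy.2 hρρ'⟩) le_rfl)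
    rwa [Measure.restrict_congr_set Ioo_ae_eq_Ioc] at h1
  have hFm' : AEStronglyMeasurable F (volume.restrict (Set.Ioc a ρ)) :=
    hFm.mono_measure (Measure.restrict_mono
      (Set.Ioc_subset_Ioc (by linarith) (by linarith)) le_rfl)
  have hmeas : AEStronglyMeasurable (fun s => T (ρ' - s) (F s))
      (volume.restrict (Set.Ioc a ρ)) :=
    isBoundedBilinearMap_apply.continuous.comp_aestronglyMeasurable
      (hTmeas.prodMk hFm')
  refine Integrable.mono' (g := fun _ => M * B)
    ((integrableOn_const_iff).mpr (Or.inr measure_Ioc_lt_top)) hmeas ?_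
  filter_upwards [ae_restrict_mem measurableSet_Ioc] with s hs
  have hs1 : s ∈ Set.Icc (0:ℝ) b := ⟨le_trans ha hs.1.le, by linarith [hs.2]⟩
  have hs2 : ρ' - s ∈ Set.Icc (0:ℝ) b :=
    ⟨by linarith [hs.2], by linarith [hs1.1]⟩
  calc ‖T (ρ' - s) (F s)‖ ≤ ‖T (ρ' - s)‖ * ‖F s‖ := (T _).le_opNorm _
    _ ≤ M * B := mul_le_mul (hT _ hs2) (hFb s hs1) (norm_nonneg _) hM0

/-- Equicontinuity of the family `{Q₂x : x ∈ Ω_r}` on each interval `(tᵢ, tᵢ₊₁]`, where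
`(Q₂x)(t) = ∫_{tᵢ}^t T(t-s)(f(s, x(s), (Hx)(s)) + w(s)) ds` and `t ↦ T(t)` is
norm-continuous on `(0, b]`. -/
theorem Q2_equicontinuous_on_pieces
    {X : Type*} [NormedAddCommGroup X] [NormedSpace ℝ X] [CompleteSpace X]
    (b : ℝ) (hb : 0 < b) (m : ℕ) (hm : 1 ≤ m)
    (tt : ℕ → ℝ) (ht0 : tt 0 = 0) (htb : tt (m + 1) = b)
    (ht_mono : ∀ i j : ℕ, i < j → j ≤ m + 1 → tt i < tt j)
    (r : ℝ) (hr : 0 < r) (M : ℝ)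
    (T : ℝ → X →L[ℝ] X)
    (hT : ∀ t ∈ Set.Icc (0:ℝ) b, ‖T t‖ ≤ M)
    (hT_normcont : ContinuousOn T (Set.Ioc (0:ℝ) b))
    -- the nonlinearity f with growth governed by μ₁, μ₂, μ₃ ∈ L^∞(I, ℝ≥0)
    (f : ℝ → X → X → X)
    (hf_cont : ContinuousOn (fun p : ℝ × X × X => f p.1 p.2.1 p.2.2)
      (Set.Icc (0:ℝ) b ×ˢ (Set.univ ×ˢ Set.univ)))
    (μ₁ μ₂ μ₃ : ℝ → ℝ) (C₁ C₂ C₃ : ℝ)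
    (hμ₁ : ∀ t ∈ Set.Icc (0:ℝ) b, 0 ≤ μ₁ t ∧ μ₁ t ≤ C₁)
    (hμ₂ : ∀ t ∈ Set.Icc (0:ℝ) b, 0 ≤ μ₂ t ∧ μ₂ t ≤ C₂)
    (hμ₃ : ∀ t ∈ Set.Icc (0:ℝ) b, 0 ≤ μ₃ t ∧ μ₃ t ≤ C₃)
    (hf_growth : ∀ t ∈ Set.Icc (0:ℝ) b, ∀ x y : X,
      ‖f t x y‖ ≤ μ₁ t + μ₂ t * ‖x‖ + μ₃ t * ‖y‖)
    -- the Volterra kernel h dominated by the bounded kernel m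
    (h : ℝ → ℝ → X → X)
    (hh_cont : ContinuousOn (fun p : ℝ × ℝ × X => h p.1 p.2.1 p.2.2)
      (Set.Icc (0:ℝ) b ×ˢ (Set.Icc (0:ℝ) b ×ˢ Set.univ)))
    (mker : ℝ → ℝ → ℝ) (Cm : ℝ)
    (hm_nonneg : ∀ t ∈ Set.Icc (0:ℝ) b, ∀ s ∈ Set.Icc (0:ℝ) b, 0 ≤ mker t s)
    (hm_bdd : ∀ t ∈ Set.Icc (0:ℝ) b, ∀ s ∈ Set.Icc (0:ℝ) b, mker t s ≤ Cm)
    (hh : ∀ t ∈ Set.Icc (0:ℝ) b, ∀ s ∈ Set.Icc (0:ℝ) b, ∀ z : X,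
      ‖h t s z‖ ≤ mker t s * ‖z‖)
    (hK : ∀ i, 1 ≤ i → i ≤ m + 1 → ∃ Ki : ℝ, ∀ t ∈ Set.Icc (0:ℝ) b,
      (∫ s in tt (i - 1)..tt i, mker t s) ≤ Ki)
    -- the inhomogeneity w ∈ L^∞(I, X)
    (w : ℝ → X) (Cw : ℝ) (hw : ∀ t ∈ Set.Icc (0:ℝ) b, ‖w t‖ ≤ Cw)
    (hw_meas : AEStronglyMeasurable w volume)
    -- the operator Q₂ on Ω_r
    (Q₂ : (ℝ → X) → ℝ → X)
    (hQ₂a : ∀ x : ℝ → X, IsPC b m tt x → (∀ s ∈ Set.Icc (0:ℝ) b, ‖x s‖ ≤ r) →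
      ∀ t ∈ Set.Icc (0:ℝ) (tt 1),
      Q₂ x t = ∫ s in (0:ℝ)..t,
        T (t - s) (f s (x s) (∫ τ in (0:ℝ)..s, h s τ (x τ)) + w s))
    (hQ₂b : ∀ x : ℝ → X, IsPC b m tt x → (∀ s ∈ Set.Icc (0:ℝ) b, ‖x s‖ ≤ r) →
      ∀ i, 1 ≤ i → i ≤ m → ∀ t ∈ Set.Ioc (tt i) (tt (i + 1)),
      Q₂ x t = ∫ s in tt i..t,
        T (t - s) (f s (x s) (∫ τ in (0:ℝ)..s, h s τ (x τ)) + w s)) :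
    ∀ ε : ℝ, 0 < ε → ∀ i ≤ m, ∃ δ : ℝ, 0 < δ ∧
      ∀ x : ℝ → X, IsPC b m tt x → (∀ s ∈ Set.Icc (0:ℝ) b, ‖x s‖ ≤ r) →
      ∀ r₁ ∈ Set.Ioc (tt i) (tt (i + 1)), ∀ r₂ ∈ Set.Ioc (tt i) (tt (i + 1)),
        |r₂ - r₁| < δ → ‖Q₂ x r₂ - Q₂ x r₁‖ < ε := by
  intro ε hε i hi
  have h0b : (0:ℝ) ∈ Set.Icc (0:ℝ) b := ⟨le_rfl, hb.le⟩
  have hC₁0 : 0 ≤ C₁ := le_trans (hμ₁ 0 h0b).1 (hμ₁ 0 h0b).2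
  have hC₂0 : 0 ≤ C₂ := le_trans (hμ₂ 0 h0b).1 (hμ₂ 0 h0b).2
  have hC₃0 : 0 ≤ C₃ := le_trans (hμ₃ 0 h0b).1 (hμ₃ 0 h0b).2
  have hM0 : 0 ≤ M := le_trans (norm_nonneg _) (hT 0 h0b)
  have hCm0 : 0 ≤ Cm := le_trans (hm_nonneg 0 h0b 0 h0b) (hm_bdd 0 h0b 0 h0b)
  have hCw0 : 0 ≤ Cw := le_trans (norm_nonneg _) (hw 0 h0b)
  set B := C₁ + C₂ * r + C₃ * (Cm * r * b) + Cw with hBdef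
  have hB0 : 0 ≤ B := by
    have h1 : 0 ≤ C₂ * r := mul_nonneg hC₂0 hr.le
    have h2 : 0 ≤ C₃ * (Cm * r * b) :=
      mul_nonneg hC₃0 (mul_nonneg (mul_nonneg hCm0 hr.le) hb.le)
    rw [hBdef]; linarith
  have hMB : 0 ≤ M * B := mul_nonneg hM0 hB0
  have hBb : 0 ≤ B * b := mul_nonneg hB0 hb.le
  have hti0 : 0 ≤ tt i := by
    rcases Nat.eq_zero_or_pos i with h0 | hpos
    · rw [h0, ht0]
    · rw [← ht0]; exact (ht_mono 0 i hpos (by omega)).le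
  have htisucc : tt (i + 1) ≤ b := by
    rcases eq_or_lt_of_le (Nat.succ_le_succ hi) with h0 | hlt
    · have h1 : i + 1 = m + 1 := by omega
      rw [← htb, h1]
    · rw [← htb]; exact (ht_mono (i + 1) (m + 1) hlt le_rfl).le
  have htlt : tt i < tt (i + 1) := ht_mono i (i + 1) (Nat.lt_succ_self i) (by omega)
  set η : ℝ := min b (ε / (3 * (2 * (M * B) + 1))) with hηdef
  have hη : 0 < η := lt_min hb (div_pos hε (by linarith))
  set εT : ℝ := ε / (3 * (B * b + 1)) with hεTdef
  have hεT : 0 < εT := div_pos hε (by linarith)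
  have hsub : Set.Icc η b ⊆ Set.Ioc (0:ℝ) b := fun y hy => ⟨lt_of_lt_of_le hη hy.1, hy.2⟩
  have hUC := isCompact_Icc.uniformContinuousOn_of_continuous (hT_normcont.mono hsub)
  obtain ⟨δ', hδ', hTuc⟩ := Metric.uniformContinuousOn_iff.mp hUC εT hεT
  set δ₀ : ℝ := ε / (3 * (M * B + 1)) with hδ₀def
  have hδ₀ : 0 < δ₀ := div_pos hε (by linarith)
  refine ⟨min δ₀ δ', lt_min hδ₀ hδ', ?_⟩
  intro x hxPC hxr r₁ hr₁ r₂ hr₂ hdist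
  set Hx : ℝ → X := fun s => ∫ τ in (0:ℝ)..s, h s τ (x τ) with hHxdef
  set F : ℝ → X := fun s => f s (x s) (Hx s) + w s with hFdef
  have hxmeas : AEStronglyMeasurable x (volume.restrict (Set.Ioc (0:ℝ) b)) :=
    pc_meas b m tt ht0 htb x hxPC.2.1
  have hHxmeas : AEStronglyMeasurable Hx (volume.restrict (Set.Ioc (0:ℝ) b)) :=
    Hx_meas b hb x hxmeas h hh_cont
  have hFm : AEStronglyMeasurable F (volume.restrict (Set.Ioc (0:ℝ) b)) := by
    refine AEStronglyMeasurable.add ?_ hw_meas.restrict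
    have hfc : Continuous (fun p : ℝ × X × X => f (max 0 (min b p.1)) p.2.1 p.2.2) := by
      have hmap : Continuous (fun p : ℝ × X × X =>
          ((max 0 (min b p.1), p.2.1, p.2.2) : ℝ × X × X)) :=
        ((clamp_cont b).comp continuous_fst).prodMk continuous_snd
      exact hf_cont.comp_continuous hmap
        (fun p => ⟨clamp_mem b hb.le _, Set.mem_univ _, Set.mem_univ _⟩)
    have hmain : AEStronglyMeasurable
        (fun s => f (max 0 (min b s)) (x s) (Hx s)) (volume.restrict (Set.Ioc (0:ℝ) b)) :=
      hfc.comp_aestronglyMeasurable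
        ((measurable_id.aestronglyMeasurable).prodMk (hxmeas.prodMk hHxmeas))
    refine hmain.congr ?_
    filter_upwards [ae_restrict_mem measurableSet_Ioc] with s hs
    rw [clamp_eq b s ⟨hs.1.le, hs.2⟩]
  have hFb : ∀ s ∈ Set.Icc (0:ℝ) b, ‖F s‖ ≤ B := by
    intro s hs
    have hHxb : ‖Hx s‖ ≤ Cm * r * b := by
      have h1 : ‖Hx s‖ ≤ Cm * r * |s - 0| := by
        refine intervalIntegral.norm_integral_le_of_norm_le_const ?_
        intro τ hτ
        rw [Set.uIoc_of_le hs.1] at hτ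
        have hτI : τ ∈ Set.Icc (0:ℝ) b := ⟨hτ.1.le, hτ.2.trans hs.2⟩
        calc ‖h s τ (x τ)‖ ≤ mker s τ * ‖x τ‖ := hh s hs τ hτI (x τ)
          _ ≤ Cm * r := mul_le_mul (hm_bdd s hs τ hτI) (hxr τ hτI)
              (norm_nonneg _) hCm0
      rw [sub_zero, abs_of_nonneg hs.1] at h1
      calc ‖Hx s‖ ≤ Cm * r * s := h1
        _ ≤ Cm * r * b := mul_le_mul_of_nonneg_left hs.2 (mul_nonneg hCm0 hr.le)
    have h2 : μ₂ s * ‖x s‖ ≤ C₂ * r :=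
      mul_le_mul (hμ₂ s hs).2 (hxr s hs) (norm_nonneg _) hC₂0
    have h3 : μ₃ s * ‖Hx s‖ ≤ C₃ * (Cm * r * b) :=
      mul_le_mul (hμ₃ s hs).2 hHxb (norm_nonneg _) hC₃0
    calc ‖F s‖ ≤ ‖f s (x s) (Hx s)‖ + ‖w s‖ := norm_add_le _ _
      _ ≤ (μ₁ s + μ₂ s * ‖x s‖ + μ₃ s * ‖Hx s‖) + Cw :=
          add_le_add (hf_growth s hs _ _) (hw s hs)
      _ ≤ B := by rw [hBdef]; linarith [(hμ₁ s hs).2]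
  have hQr : ∀ ρ ∈ Set.Ioc (tt i) (tt (i + 1)),
      Q₂ x ρ = ∫ s in tt i..ρ, T (ρ - s) (F s) := by
    intro ρ hρ
    rcases Nat.eq_zero_or_pos i with h0 | hpos
    · subst h0
      have hρ0 : (0:ℝ) < ρ := by rw [← ht0]; exact hρ.1
      have h2 := hQ₂a x hxPC hxr ρ ⟨hρ0.le, hρ.2⟩
      rw [ht0, h2]
    · have h2 := hQ₂b x hxPC hxr i hpos hi ρ hρ
      rw [h2]
  have key : ∀ u ∈ Set.Ioc (tt i) (tt (i + 1)), ∀ v ∈ Set.Ioc (tt i) (tt (i + 1)),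
      u ≤ v → v - u < min δ₀ δ' → ‖Q₂ x v - Q₂ x u‖ < ε := by
    intro u hu v hv huv hd
    have htiu : tt i < u := hu.1
    have hu0 : 0 ≤ u := le_trans hti0 htiu.le
    have hub : u ≤ b := hu.2.trans htisucc
    have hvb : v ≤ b := hv.2.trans htisucc
    set c : ℝ := max (tt i) (u - η) with hcdef
    have hc1 : tt i ≤ c := le_max_left _ _
    have hc2 : c ≤ u := max_le htiu.le (by linarith)
    have II2' : IntervalIntegrable (fun s => T (v - s) (F s)) volume (tt i) u :=
      key_integrable b M B hb T hT hT_normcont F hFm hFb (tt i) u v hti0 htiu.le huv hvb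
    have IIseg : IntervalIntegrable (fun s => T (v - s) (F s)) volume u v :=
      key_integrable b M B hb T hT hT_normcont F hFm hFb u v v hu0 huv le_rfl hvb
    have II1 : IntervalIntegrable (fun s => T (u - s) (F s)) volume (tt i) u :=
      key_integrable b M B hb T hT hT_normcont F hFm hFb (tt i) u u hti0 htiu.le le_rfl hub
    have IIdiff : IntervalIntegrable
        (fun s => T (v - s) (F s) - T (u - s) (F s)) volume (tt i) u := II2'.sub II1
    have hsub1 : Set.uIcc (tt i) c ⊆ Set.uIcc (tt i) u := by
      rw [Set.uIcc_of_le hc1, Set.uIcc_of_le htiu.le]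
      exact Set.Icc_subset_Icc le_rfl hc2
    have hsub2 : Set.uIcc c u ⊆ Set.uIcc (tt i) u := by
      rw [Set.uIcc_of_le hc2, Set.uIcc_of_le htiu.le]
      exact Set.Icc_subset_Icc hc1 le_rfl
    have ID1 := IIdiff.mono_set hsub1
    have ID2 := IIdiff.mono_set hsub2
    have e1 : (∫ s in tt i..u, T (v - s) (F s)) + (∫ s in u..v, T (v - s) (F s))
        = ∫ s in tt i..v, T (v - s) (F s) :=
      intervalIntegral.integral_add_adjacent_intervals II2' IIseg
    have e2 : (∫ s in tt i..c, (T (v - s) (F s) - T (u - s) (F s)))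
        + (∫ s in c..u, (T (v - s) (F s) - T (u - s) (F s)))
        = ∫ s in tt i..u, (T (v - s) (F s) - T (u - s) (F s)) :=
      intervalIntegral.integral_add_adjacent_intervals ID1 ID2
    have e3 : (∫ s in tt i..u, (T (v - s) (F s) - T (u - s) (F s)))
        = (∫ s in tt i..u, T (v - s) (F s)) - ∫ s in tt i..u, T (u - s) (F s) :=
      intervalIntegral.integral_sub II2' II1
    have hsplit : Q₂ x v - Q₂ x u
        = (∫ s in u..v, T (v - s) (F s))
          + ((∫ s in tt i..c, (T (v - s) (F s) - T (u - s) (F s)))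
            + (∫ s in c..u, (T (v - s) (F s) - T (u - s) (F s)))) := by
      rw [hQr v hv, hQr u hu, e2, e3, ← e1]
      abel
    have hbd1 : ‖∫ s in u..v, T (v - s) (F s)‖ ≤ M * B * (v - u) := by
      have hptw : ∀ s ∈ Set.uIoc u v, ‖T (v - s) (F s)‖ ≤ M * B := by
        intro s hs
        rw [Set.uIoc_of_le huv] at hs
        have hsI : s ∈ Set.Icc (0:ℝ) b := ⟨le_trans hu0 hs.1.le, hs.2.trans hvb⟩
        have hvs : v - s ∈ Set.Icc (0:ℝ) b := ⟨by linarith [hs.2], by linarith [hsI.1]⟩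
        calc ‖T (v - s) (F s)‖ ≤ ‖T (v - s)‖ * ‖F s‖ := (T _).le_opNorm _
          _ ≤ M * B := mul_le_mul (hT _ hvs) (hFb s hsI) (norm_nonneg _) hM0
      have h := intervalIntegral.norm_integral_le_of_norm_le_const hptw
      rwa [abs_of_nonneg (by linarith)] at h
    have hbd2 : ‖∫ s in c..u, (T (v - s) (F s) - T (u - s) (F s))‖ ≤ 2 * (M * B) * η := by
      have hptw : ∀ s ∈ Set.uIoc c u,
          ‖T (v - s) (F s) - T (u - s) (F s)‖ ≤ 2 * (M * B) := by
        intro s hs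
        rw [Set.uIoc_of_le hc2] at hs
        have hsI : s ∈ Set.Icc (0:ℝ) b :=
          ⟨le_trans hti0 (lt_of_le_of_lt hc1 hs.1).le, hs.2.trans hub⟩
        have hvs : v - s ∈ Set.Icc (0:ℝ) b :=
          ⟨by linarith [hs.2, huv], by linarith [hsI.1, hvb]⟩
        have hus : u - s ∈ Set.Icc (0:ℝ) b :=
          ⟨by linarith [hs.2], by linarith [hsI.1, hub]⟩
        have b1 : ‖T (v - s) (F s)‖ ≤ M * B :=
          le_trans ((T _).le_opNorm _)
            (mul_le_mul (hT _ hvs) (hFb s hsI) (norm_nonneg _) hM0)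
        have b2 : ‖T (u - s) (F s)‖ ≤ M * B :=
          le_trans ((T _).le_opNorm _)
            (mul_le_mul (hT _ hus) (hFb s hsI) (norm_nonneg _) hM0)
        calc ‖T (v - s) (F s) - T (u - s) (F s)‖
            ≤ ‖T (v - s) (F s)‖ + ‖T (u - s) (F s)‖ := norm_sub_le _ _
          _ ≤ 2 * (M * B) := by linarith
      have h := intervalIntegral.norm_integral_le_of_norm_le_const hptw
      rw [abs_of_nonneg (by linarith)] at h
      refine le_trans h ?_
      have : u - c ≤ η := by
        have := le_max_right (tt i) (u - η); linarith [hc1]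
      exact mul_le_mul_of_nonneg_left this (by linarith)
    have hbd3 : ‖∫ s in tt i..c, (T (v - s) (F s) - T (u - s) (F s))‖ ≤ εT * B * b := by
      have hptw : ∀ s ∈ Set.uIoc (tt i) c,
          ‖T (v - s) (F s) - T (u - s) (F s)‖ ≤ εT * B := by
        intro s hs
        rw [Set.uIoc_of_le hc1] at hs
        have hcu : tt i < u - η := by
          by_contra hcon
          push_neg at hcon
          have hceq : c = tt i := max_eq_left hcon
          rw [hceq] at hs
          exact absurd hs.2 (not_le.mpr hs.1)
        have hceq : c = u - η := max_eq_right hcu.le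
        have hs1 : s ≤ u - η := hceq ▸ hs.2
        have hsI : s ∈ Set.Icc (0:ℝ) b :=
          ⟨le_trans hti0 hs.1.le, by linarith [hs.2, hc2, hub]⟩
        have hus : u - s ∈ Set.Icc η b := ⟨by linarith, by linarith [hti0, hs.1]⟩
        have hvs : v - s ∈ Set.Icc η b := ⟨by linarith, by linarith [hti0, hs.1, hvb]⟩
        have hdist2 : dist (v - s) (u - s) < δ' := by
          rw [Real.dist_eq]
          have he : v - s - (u - s) = v - u := by ring
          rw [he, abs_of_nonneg (by linarith)]
          exact lt_of_lt_of_le hd (min_le_right _ _)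
        have hTd := hTuc _ hvs _ hus hdist2
        rw [dist_eq_norm] at hTd
        calc ‖T (v - s) (F s) - T (u - s) (F s)‖
            = ‖(T (v - s) - T (u - s)) (F s)‖ := by rw [ContinuousLinearMap.sub_apply]
          _ ≤ ‖T (v - s) - T (u - s)‖ * ‖F s‖ := (T (v - s) - T (u - s)).le_opNorm _
          _ ≤ εT * B := mul_le_mul hTd.le (hFb s hsI) (norm_nonneg _) hεT.le
      have h := intervalIntegral.norm_integral_le_of_norm_le_const hptw
      rw [abs_of_nonneg (by linarith)] at h
      refine le_trans h ?_
      have hcb : c - tt i ≤ b := by linarith [hc2, hub, hti0]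
      exact mul_le_mul_of_nonneg_left hcb (mul_nonneg hεT.le hB0)
    have f1 : M * B * (v - u) < ε / 3 := by
      have h1 : M * B * (v - u) ≤ M * B * δ₀ :=
        mul_le_mul_of_nonneg_left (le_of_lt (lt_of_lt_of_le hd (min_le_left _ _))) hMB
      refine lt_of_le_of_lt h1 ?_
      rw [hδ₀def]
      exact arith_aux (M * B) ε hMB hε
    have f2 : 2 * (M * B) * η < ε / 3 := by
      have h1 : 2 * (M * B) * η ≤ 2 * (M * B) * (ε / (3 * (2 * (M * B) + 1))) :=
        mul_le_mul_of_nonneg_left (min_le_right _ _) (by linarith)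
      exact lt_of_le_of_lt h1 (arith_aux (2 * (M * B)) ε (by linarith) hε)
    have f3 : εT * B * b < ε / 3 := by
      have h1 : εT * B * b = (B * b) * (ε / (3 * (B * b + 1))) := by rw [hεTdef]; ring
      rw [h1]
      exact arith_aux (B * b) ε hBb hε
    rw [hsplit]
    calc ‖(∫ s in u..v, T (v - s) (F s))
          + ((∫ s in tt i..c, (T (v - s) (F s) - T (u - s) (F s)))
            + (∫ s in c..u, (T (v - s) (F s) - T (u - s) (F s))))‖
        ≤ ‖∫ s in u..v, T (v - s) (F s)‖
          + (‖∫ s in tt i..c, (T (v - s) (F s) - T (u - s) (F s))‖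
            + ‖∫ s in c..u, (T (v - s) (F s) - T (u - s) (F s))‖) :=
          le_trans (norm_add_le _ _) (by gcongr; exact norm_add_le _ _)
      _ < ε / 3 + (ε / 3 + ε / 3) := by
          have g1 := lt_of_le_of_lt hbd1 f1
          have g3 := lt_of_le_of_lt hbd3 f3
          have g2 := lt_of_le_of_lt hbd2 f2
          linarith
      _ = ε := by ring
  rcases le_total r₁ r₂ with hle | hle
  · refine key r₁ hr₁ r₂ hr₂ hle ?_
    rwa [abs_of_nonneg (by linarith)] at hdist
  · rw [norm_sub_rev]
    refine key r₂ hr₂ r₁ hr₁ hle ?_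
    rwa [abs_sub_comm, abs_of_nonneg (by linarith)] at hdist
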